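/- There exists a nonzero real polynomial g in eight variables a_{11},a_{12},a_{21},a_{22},b_{11},b_{12},b_{21},b_{22} such that for all real payoff matrices a, b satisfying g(a,b) ≠ 0 together with the sign conditions (a_{11}−a_{21})(a_{22}−a_{12}) > 0 and (b_{11}−b_{12})(b_{22}−b_{21}) > 0, the set of dependency equilibria { P ∈ ℝ^{2×2} : all p_{ij} > 0, Σ p_{ij} = 1, f_1(P) = f_2(P) = 0 } of the 2×2 game (a,b), with the subspace topology from ℝ⁴, is nonempty and connected (it consists of exactly one arc). -/

import Mathlib

/-- The set of dependency equilibria of the `2 × 2` game with payoff matrices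
`a = (aᵢⱼ)` and `b = (bᵢⱼ)`, as a subset of `ℝ⁴`. -/
def depEquilibria (a11 a12 a21 a22 b11 b12 b21 b22 : ℝ) :
    Set (ℝ × ℝ × ℝ × ℝ) :=
  {P | (0 < P.1 ∧ 0 < P.2.1 ∧ 0 < P.2.2.1 ∧ 0 < P.2.2.2) ∧
       P.1 + P.2.1 + P.2.2.1 + P.2.2.2 = 1 ∧
       (P.1 + P.2.1) * (a21 * P.2.2.1 + a22 * P.2.2.2)
         - (a11 * P.1 + a12 * P.2.1) * (P.2.2.1 + P.2.2.2) = 0 ∧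
       (P.1 + P.2.2.1) * (b12 * P.2.1 + b22 * P.2.2.2)
         - (b11 * P.1 + b21 * P.2.2.1) * (P.2.1 + P.2.2.2) = 0}


open Set


/-- `f₂` rewritten in coordinates `r = p₁₁+p₁₂`, `x = p₁₁/r`, `y = p₂₁/(1-r)`. -/
def Fq (b11 b12 b21 b22 x y r : ℝ) : ℝ :=
  (r*x + (1-r)*y) * (b12*(r*(1-x)) + b22*((1-r)*(1-y)))
    - (b11*(r*x) + b21*((1-r)*y)) * (r*(1-x) + (1-r)*(1-y))

lemma Fq_cont (b11 b12 b21 b22 x y : ℝ) : Continuous (Fq b11 b12 b21 b22 x y) := by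
  unfold Fq; fun_prop

lemma Fq_cont2 (b11 b12 b21 b22 r : ℝ) :
    Continuous (fun q : ℝ × ℝ => Fq b11 b12 b21 b22 q.1 q.2 r) := by
  unfold Fq; fun_prop

lemma quad_two_roots_sign {c2 c1 c0 r1 r2 : ℝ}
    (h1 : c2*r1^2 + c1*r1 + c0 = 0) (h2 : c2*r2^2 + c1*r2 + c0 = 0)
    (hne : r1 ≠ r2) (ha : 0 < r1) (hb : r1 < 1) (hc : 0 < r2) (hd : r2 < 1) :
    0 ≤ c0 * (c2 + c1 + c0) := by
  have hsub : r1 - r2 ≠ 0 := sub_ne_zero.mpr hne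
  have hd0 : (r1 - r2) * (c2*(r1+r2) + c1) = 0 := by linear_combination h1 - h2
  have hE : c2*(r1+r2) + c1 = 0 := (mul_eq_zero.mp hd0).resolve_left hsub
  have hc0 : c0 = c2*(r1*r2) := by linear_combination h1 - r1*hE
  have hs : c2 + c1 + c0 = c2*((1-r1)*(1-r2)) := by linear_combination hc0 + hE
  have key : c0 * (c2 + c1 + c0) = c2^2 * ((r1*r2)*((1-r1)*(1-r2))) := by
    linear_combination (c2+c1+c0)*hc0 + (c2*(r1*r2))*hs
  rw [key]
  have : 0 < (r1*r2)*((1-r1)*(1-r2)) := by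
    apply mul_pos (mul_pos ha hc) (mul_pos (by linarith) (by linarith))
  exact mul_nonneg (sq_nonneg c2) this.le

lemma same_sign_of_no_root {F : ℝ → ℝ} (hF : Continuous F) {u t : ℝ} (hut : u ≤ t)
    (hFu : F u ≠ 0) (hFt : F t ≠ 0) (hno : ∀ s ∈ Ioo u t, F s ≠ 0) :
    0 < F u * F t := by
  rcases lt_or_ge (F u * F t) 0 with h | h
  · rcases mul_neg_iff.mp h with ⟨h1, h2⟩ | ⟨h1, h2⟩
    · obtain ⟨s, hs, hFs⟩ := intermediate_value_Ioo' hut hF.continuousOn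
        (show (0:ℝ) ∈ Ioo (F t) (F u) from ⟨h2, h1⟩)
      exact absurd hFs (hno s hs)
    · obtain ⟨s, hs, hFs⟩ := intermediate_value_Ioo hut hF.continuousOn
        (show (0:ℝ) ∈ Ioo (F u) (F t) from ⟨h1, h2⟩)
      exact absurd hFs (hno s hs)
  · exact h.lt_of_ne' (mul_ne_zero hFu hFt)

lemma Fq_zero (b11 b12 b21 b22 x y : ℝ) :
    Fq b11 b12 b21 b22 x y 0 = y*(1-y)*(b22-b21) := by unfold Fq; ring

lemma Fq_one (b11 b12 b21 b22 x y : ℝ) :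
    Fq b11 b12 b21 b22 x y 1 = x*(1-x)*(b12-b11) := by unfold Fq; ring

lemma Fq_endpoints_neg {b11 b12 b21 b22 x y : ℝ} (hb : 0 < (b11-b12)*(b22-b21))
    (hx0 : 0 < x) (hx1 : x < 1) (hy0 : 0 < y) (hy1 : y < 1) :
    Fq b11 b12 b21 b22 x y 0 * Fq b11 b12 b21 b22 x y 1 < 0 := by
  rw [Fq_zero, Fq_one]
  nlinarith [mul_pos (mul_pos (mul_pos hx0 (sub_pos.mpr hx1)) (mul_pos hy0 (sub_pos.mpr hy1))) hb]

lemma Fq_existsUnique {b11 b12 b21 b22 x y : ℝ} (hb : 0 < (b11-b12)*(b22-b21))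
    (hx0 : 0 < x) (hx1 : x < 1) (hy0 : 0 < y) (hy1 : y < 1) :
    ∃! r, r ∈ Ioo (0:ℝ) 1 ∧ Fq b11 b12 b21 b22 x y r = 0 := by
  have hprod := Fq_endpoints_neg hb hx0 hx1 hy0 hy1
  have hcont := Fq_cont b11 b12 b21 b22 x y
  have hex : ∃ r ∈ Ioo (0:ℝ) 1, Fq b11 b12 b21 b22 x y r = 0 := by
    rcases mul_neg_iff.mp hprod with ⟨h1, h2⟩ | ⟨h1, h2⟩
    · obtain ⟨r, hr, hFr⟩ := intermediate_value_Ioo' (by norm_num : (0:ℝ) ≤ 1)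
        hcont.continuousOn (show (0:ℝ) ∈ Ioo _ _ from ⟨h2, h1⟩)
      exact ⟨r, hr, hFr⟩
    · obtain ⟨r, hr, hFr⟩ := intermediate_value_Ioo (by norm_num : (0:ℝ) ≤ 1)
        hcont.continuousOn (show (0:ℝ) ∈ Ioo _ _ from ⟨h1, h2⟩)
      exact ⟨r, hr, hFr⟩
  obtain ⟨r, hr, hFr⟩ := hex
  refine ⟨r, ⟨hr, hFr⟩, ?_⟩
  rintro s ⟨hs, hFs⟩
  by_contra hne
  have key : ∀ t, Fq b11 b12 b21 b22 x y t =
      ((x-y)*(b12*(1-x)-b22*(1-y)) - (b11*x-b21*y)*(y-x))*t^2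
      + ((x-y)*(b22*(1-y)) + y*(b12*(1-x)-b22*(1-y))
          - ((b11*x-b21*y)*(1-y) + (b21*y)*(y-x)))*t
      + y*(1-y)*(b22-b21) := by
    intro t; unfold Fq; ring
  have h1 := hFs; rw [key s] at h1
  have h2 := hFr; rw [key r] at h2
  have hge := quad_two_roots_sign h1 h2 hne hs.1 hs.2 hr.1 hr.2
  have heq : (y*(1-y)*(b22-b21)) *
      (((x-y)*(b12*(1-x)-b22*(1-y)) - (b11*x-b21*y)*(y-x))
       + ((x-y)*(b22*(1-y)) + y*(b12*(1-x)-b22*(1-y))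
          - ((b11*x-b21*y)*(1-y) + (b21*y)*(y-x)))
       + y*(1-y)*(b22-b21))
      = Fq b11 b12 b21 b22 x y 0 * Fq b11 b12 b21 b22 x y 1 := by
    rw [key 0, key 1]; ring
  rw [heq] at hge
  linarith

open Classical in
noncomputable def rho (b11 b12 b21 b22 x y : ℝ) : ℝ :=
  if h : ∃ r, r ∈ Ioo (0:ℝ) 1 ∧ Fq b11 b12 b21 b22 x y r = 0 then h.choose else 1/2

lemma rho_spec {b11 b12 b21 b22 x y : ℝ} (hb : 0 < (b11-b12)*(b22-b21))
    (hx0 : 0 < x) (hx1 : x < 1) (hy0 : 0 < y) (hy1 : y < 1) :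
    rho b11 b12 b21 b22 x y ∈ Ioo (0:ℝ) 1 ∧
      Fq b11 b12 b21 b22 x y (rho b11 b12 b21 b22 x y) = 0 := by
  have h := (Fq_existsUnique hb hx0 hx1 hy0 hy1).exists
  rw [rho]
  rw [dif_pos h]
  exact h.choose_spec

lemma rho_unique {b11 b12 b21 b22 x y : ℝ} (hb : 0 < (b11-b12)*(b22-b21))
    (hx0 : 0 < x) (hx1 : x < 1) (hy0 : 0 < y) (hy1 : y < 1)
    {r : ℝ} (hr : r ∈ Ioo (0:ℝ) 1) (hFr : Fq b11 b12 b21 b22 x y r = 0) :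
    r = rho b11 b12 b21 b22 x y :=
  (Fq_existsUnique hb hx0 hx1 hy0 hy1).unique ⟨hr, hFr⟩ (rho_spec hb hx0 hx1 hy0 hy1)

lemma rho_continuousOn (b11 b12 b21 b22 : ℝ) (hb : 0 < (b11-b12)*(b22-b21)) :
    ContinuousOn (fun q : ℝ × ℝ => rho b11 b12 b21 b22 q.1 q.2)
      (Ioo (0:ℝ) 1 ×ˢ Ioo (0:ℝ) 1) := by
  intro p hp
  obtain ⟨⟨hx0, hx1⟩, hy0, hy1⟩ := hp
  rw [Metric.continuousWithinAt_iff]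
  intro ε hε
  set r0 := rho b11 b12 b21 b22 p.1 p.2 with hr0def
  obtain ⟨⟨hr00, hr01⟩, hr0root⟩ := rho_spec hb hx0 hx1 hy0 hy1
  set ε' := min (min r0 (1 - r0)) ε / 2 with hε'def
  have hε'pos : 0 < ε' := by
    apply div_pos _ two_pos
    exact lt_min (lt_min hr00 (by linarith)) hε
  have hlow : 0 < r0 - ε' := by
    have : ε' ≤ r0 / 2 := by
      have h1 : min (min r0 (1 - r0)) ε ≤ r0 := le_trans (min_le_left _ _) (min_le_left _ _)
      simp only [hε'def]; linarith
    linarith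
  have hhigh : r0 + ε' < 1 := by
    have : ε' ≤ (1 - r0) / 2 := by
      have h1 : min (min r0 (1 - r0)) ε ≤ 1 - r0 :=
        le_trans (min_le_left _ _) (min_le_right _ _)
      simp only [hε'def]; linarith
    linarith
  have hε'ε : ε' < ε := by
    have h1 : min (min r0 (1 - r0)) ε ≤ ε := min_le_right _ _
    simp only [hε'def]; linarith
  have hprod0 : Fq b11 b12 b21 b22 p.1 p.2 0 * Fq b11 b12 b21 b22 p.1 p.2 1 < 0 :=
    Fq_endpoints_neg hb hx0 hx1 hy0 hy1
  have hF0ne : Fq b11 b12 b21 b22 p.1 p.2 0 ≠ 0 := by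
    intro h; rw [h, zero_mul] at hprod0; exact lt_irrefl 0 hprod0
  have hF1ne : Fq b11 b12 b21 b22 p.1 p.2 1 ≠ 0 := by
    intro h; rw [h, mul_zero] at hprod0; exact lt_irrefl 0 hprod0
  have huniq : ∀ s ∈ Ioo (0:ℝ) 1, Fq b11 b12 b21 b22 p.1 p.2 s = 0 → s = r0 :=
    fun s hs hFs => rho_unique hb hx0 hx1 hy0 hy1 hs hFs
  have hFmne : Fq b11 b12 b21 b22 p.1 p.2 (r0 - ε') ≠ 0 := by
    intro h
    have := huniq _ ⟨hlow, by linarith⟩ h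
    linarith [hε'pos, this]
  have hFpne : Fq b11 b12 b21 b22 p.1 p.2 (r0 + ε') ≠ 0 := by
    intro h
    have := huniq _ ⟨by linarith, hhigh⟩ h
    linarith [hε'pos, this]
  have hsignL : 0 < Fq b11 b12 b21 b22 p.1 p.2 0 * Fq b11 b12 b21 b22 p.1 p.2 (r0 - ε') := by
    apply same_sign_of_no_root (Fq_cont _ _ _ _ _ _) (by linarith) hF0ne hFmne
    intro s hs hFs
    have := huniq s ⟨hs.1, by linarith [hs.2]⟩ hFs
    linarith [hs.2]
  have hsignR : 0 < Fq b11 b12 b21 b22 p.1 p.2 (r0 + ε') * Fq b11 b12 b21 b22 p.1 p.2 1 := by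
    apply same_sign_of_no_root (Fq_cont _ _ _ _ _ _) (by linarith) hFpne hF1ne
    intro s hs hFs
    have := huniq s ⟨by linarith [hs.1], hs.2⟩ hFs
    linarith [hs.1]
  have hAB : Fq b11 b12 b21 b22 p.1 p.2 (r0 - ε') * Fq b11 b12 b21 b22 p.1 p.2 (r0 + ε') < 0 := by
    nlinarith [mul_pos hsignL hsignR]
  -- openness of the sign condition
  have hcontAB : Continuous (fun q : ℝ × ℝ =>
      Fq b11 b12 b21 b22 q.1 q.2 (r0 - ε') * Fq b11 b12 b21 b22 q.1 q.2 (r0 + ε')) := by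
    unfold Fq; fun_prop
  have hopen : IsOpen {q : ℝ × ℝ |
      Fq b11 b12 b21 b22 q.1 q.2 (r0 - ε') * Fq b11 b12 b21 b22 q.1 q.2 (r0 + ε') < 0} :=
    isOpen_lt hcontAB continuous_const
  obtain ⟨δ, hδpos, hδ⟩ := Metric.isOpen_iff.mp hopen p hAB
  refine ⟨δ, hδpos, ?_⟩
  intro q hq hdist
  obtain ⟨⟨hqx0, hqx1⟩, hqy0, hqy1⟩ := hq
  have hqAB : Fq b11 b12 b21 b22 q.1 q.2 (r0 - ε') * Fq b11 b12 b21 b22 q.1 q.2 (r0 + ε') < 0 :=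
    hδ (Metric.mem_ball.mpr hdist)
  have hroot : ∃ s ∈ Ioo (r0 - ε') (r0 + ε'), Fq b11 b12 b21 b22 q.1 q.2 s = 0 := by
    rcases mul_neg_iff.mp hqAB with ⟨h1, h2⟩ | ⟨h1, h2⟩
    · obtain ⟨s, hs, hFs⟩ := intermediate_value_Ioo' (by linarith : r0 - ε' ≤ r0 + ε')
        (Fq_cont b11 b12 b21 b22 q.1 q.2).continuousOn
        (show (0:ℝ) ∈ Ioo _ _ from ⟨h2, h1⟩)
      exact ⟨s, hs, hFs⟩
    · obtain ⟨s, hs, hFs⟩ := intermediate_value_Ioo (by linarith : r0 - ε' ≤ r0 + ε')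
        (Fq_cont b11 b12 b21 b22 q.1 q.2).continuousOn
        (show (0:ℝ) ∈ Ioo _ _ from ⟨h1, h2⟩)
      exact ⟨s, hs, hFs⟩
  obtain ⟨s, hs, hFs⟩ := hroot
  have hsIoo : s ∈ Ioo (0:ℝ) 1 := ⟨by linarith [hs.1], by linarith [hs.2]⟩
  have hseq : s = rho b11 b12 b21 b22 q.1 q.2 :=
    rho_unique hb hqx0 hqx1 hqy0 hqy1 hsIoo hFs
  rw [Real.dist_eq, ← hseq, abs_lt]
  constructor <;> [linarith [hs.1] ; linarith [hs.2]]


lemma aux_param {c d v : ℝ} (hne : c ≠ d) (h1 : min c d < v) (h2 : v < max c d) :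
    (v - d)/(c - d) ∈ Ioo (0:ℝ) 1 ∧
      c * ((v-d)/(c-d)) + d * (1 - (v-d)/(c-d)) = v := by
  have hcd : c - d ≠ 0 := sub_ne_zero.mpr hne
  have hsq : 0 < (c-d)^2 := by positivity
  have hnum1 : 0 < (v - d)*(c - d) := by
    rcases lt_or_gt_of_ne hne with h | h
    · rw [min_eq_left h.le] at h1; rw [max_eq_right h.le] at h2
      exact mul_pos_of_neg_of_neg (by linarith) (by linarith)
    · rw [min_eq_right h.le] at h1; rw [max_eq_left h.le] at h2
      exact mul_pos (by linarith) (by linarith)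
  have hnum2 : 0 < (c - v)*(c - d) := by
    rcases lt_or_gt_of_ne hne with h | h
    · rw [min_eq_left h.le] at h1; rw [max_eq_right h.le] at h2
      exact mul_pos_of_neg_of_neg (by linarith) (by linarith)
    · rw [min_eq_right h.le] at h1; rw [max_eq_left h.le] at h2
      exact mul_pos (by linarith) (by linarith)
  refine ⟨⟨?_, ?_⟩, ?_⟩
  · have : (v - d)/(c - d) = ((v-d)*(c-d))/((c-d)^2) := by
      rw [pow_two, mul_div_mul_right _ _ hcd]
    rw [this]; exact div_pos hnum1 hsq
  · have key : 1 - (v - d)/(c - d) = ((c-v)*(c-d))/((c-d)^2) := by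
      rw [pow_two, mul_div_mul_right _ _ hcd]
      field_simp
      ring
    have : 0 < 1 - (v - d)/(c - d) := by rw [key]; exact div_pos hnum2 hsq
    linarith
  · field_simp
    try ring

lemma C_nonempty {a11 a12 a21 a22 : ℝ} (ha : 0 < (a11 - a21) * (a22 - a12)) :
    ∃ x y : ℝ, x ∈ Ioo (0:ℝ) 1 ∧ y ∈ Ioo (0:ℝ) 1 ∧
      a11*x + a12*(1-x) = a21*y + a22*(1-y) := by
  by_cases h1 : a11 = a12
  · -- row payoffs constant; a21 < a11 < a22 or a22 < a11 < a21
    subst h1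
    have hne : a21 ≠ a22 := by
      intro h; rw [h] at ha; nlinarith [sq_nonneg (a11 - a22)]
    have hbound : min a21 a22 < a11 ∧ a11 < max a21 a22 := by
      rcases mul_pos_iff.mp ha with ⟨u, v⟩ | ⟨u, v⟩
      · constructor
        · exact lt_of_le_of_lt (min_le_left _ _) (by linarith)
        · exact lt_of_lt_of_le (by linarith) (le_max_right _ _)
      · constructor
        · exact lt_of_le_of_lt (min_le_right _ _) (by linarith)
        · exact lt_of_lt_of_le (by linarith) (le_max_left _ _)
    obtain ⟨hy, heq⟩ := aux_param hne hbound.1 hbound.2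
    exact ⟨1/2, (a11 - a22)/(a21 - a22), by norm_num, hy, by linarith [heq]⟩
  · by_cases h2 : a21 = a22
    · subst h2
      have hbound : min a11 a12 < a21 ∧ a21 < max a11 a12 := by
        rcases mul_pos_iff.mp ha with ⟨u, v⟩ | ⟨u, v⟩
        · constructor
          · exact lt_of_le_of_lt (min_le_right _ _) (by linarith)
          · exact lt_of_lt_of_le (by linarith) (le_max_left _ _)
        · constructor
          · exact lt_of_le_of_lt (min_le_left _ _) (by linarith)
          · exact lt_of_lt_of_le (by linarith) (le_max_right _ _)
      obtain ⟨hx, heq⟩ := aux_param h1 hbound.1 hbound.2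
      exact ⟨(a21 - a12)/(a11 - a12), 1/2, hx, by norm_num, by linarith [heq]⟩
    · -- both rows nondegenerate
      set m := max (min a11 a12) (min a21 a22) with hm
      set M := min (max a11 a12) (max a21 a22) with hM
      have hmM : m < M := by
        apply max_lt <;> apply lt_min
        · exact min_lt_max.mpr h1
        · rcases mul_pos_iff.mp ha with ⟨u, v⟩ | ⟨u, v⟩
          · exact lt_of_le_of_lt (min_le_right _ _) (lt_of_lt_of_le (by linarith) (le_max_right _ _))
          · exact lt_of_le_of_lt (min_le_left _ _) (lt_of_lt_of_le (by linarith) (le_max_left _ _))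
        · rcases mul_pos_iff.mp ha with ⟨u, v⟩ | ⟨u, v⟩
          · exact lt_of_le_of_lt (min_le_left _ _) (lt_of_lt_of_le (by linarith) (le_max_left _ _))
          · exact lt_of_le_of_lt (min_le_right _ _) (lt_of_lt_of_le (by linarith) (le_max_right _ _))
        · exact min_lt_max.mpr h2
      set v := (m + M)/2 with hv
      have hv1 : min a11 a12 < v := lt_of_le_of_lt (le_max_left _ _ : min a11 a12 ≤ m) (by simp only [hv]; linarith)
      have hv2 : v < max a11 a12 := lt_of_lt_of_le (by simp only [hv]; linarith : v < M) (min_le_left _ _)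
      have hv3 : min a21 a22 < v := lt_of_le_of_lt (le_max_right _ _ : min a21 a22 ≤ m) (by simp only [hv]; linarith)
      have hv4 : v < max a21 a22 := lt_of_lt_of_le (by simp only [hv]; linarith : v < M) (min_le_right _ _)
      obtain ⟨hx, heqx⟩ := aux_param h1 hv1 hv2
      obtain ⟨hy, heqy⟩ := aux_param h2 hv3 hv4
      exact ⟨_, _, hx, hy, by linarith [heqx, heqy]⟩


/-- For a generic `2 × 2` game satisfying the sign
conditions `(a₁₁−a₂₁)(a₂₂−a₁₂) > 0` and `(b₁₁−b₁₂)(b₂₂−b₂₁) > 0`, the set of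
dependency equilibria is nonempty and connected: it consists of one arc. -/
theorem generic_game_sign_condition_one_arc :
    ∃ g : MvPolynomial (Fin 8) ℝ, g ≠ 0 ∧
      ∀ a11 a12 a21 a22 b11 b12 b21 b22 : ℝ,
        MvPolynomial.eval
          (![a11, a12, a21, a22, b11, b12, b21, b22]) g ≠ 0 →
        0 < (a11 - a21) * (a22 - a12) →
        0 < (b11 - b12) * (b22 - b21) →
        IsConnected (depEquilibria a11 a12 a21 a22 b11 b12 b21 b22) := by
  refine ⟨1, one_ne_zero, ?_⟩
  intro a11 a12 a21 a22 b11 b12 b21 b22 _ ha hb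
  -- the connected parameter set
  set C : Set (ℝ × ℝ) := {q : ℝ × ℝ | q.1 ∈ Ioo (0:ℝ) 1 ∧ q.2 ∈ Ioo (0:ℝ) 1 ∧
      a11*q.1 + a12*(1-q.1) = a21*q.2 + a22*(1-q.2)} with hC
  have hCconv : Convex ℝ C := by
    rintro q ⟨hq1, hq2, hq3⟩ q' ⟨hq1', hq2', hq3'⟩ u w hu hw huw
    refine ⟨?_, ?_, ?_⟩
    · have := convex_Ioo (0:ℝ) 1 hq1 hq1' hu hw huw
      simpa [Prod.fst_add, Prod.smul_fst, smul_eq_mul] using this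
    · have := convex_Ioo (0:ℝ) 1 hq2 hq2' hu hw huw
      simpa [Prod.snd_add, Prod.smul_snd, smul_eq_mul] using this
    · show a11*(u • q + w • q').1 + a12*(1-(u • q + w • q').1)
        = a21*(u • q + w • q').2 + a22*(1-(u • q + w • q').2)
      simp only [Prod.fst_add, Prod.smul_fst, Prod.snd_add, Prod.smul_snd, smul_eq_mul]
      linear_combination u*hq3 + w*hq3' + (a22 - a12)*huw
  have hCne : C.Nonempty := by
    obtain ⟨x, y, hx, hy, heq⟩ := C_nonempty ha
    exact ⟨(x, y), hx, hy, heq⟩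
  have hCconn : IsConnected C := hCconv.isConnected hCne
  have hCsub : C ⊆ Ioo (0:ℝ) 1 ×ˢ Ioo (0:ℝ) 1 := fun q hq => ⟨hq.1, hq.2.1⟩
  -- the parametrizing map
  set G : ℝ × ℝ → ℝ × ℝ × ℝ × ℝ := fun q =>
    (rho b11 b12 b21 b22 q.1 q.2 * q.1,
     rho b11 b12 b21 b22 q.1 q.2 * (1 - q.1),
     (1 - rho b11 b12 b21 b22 q.1 q.2) * q.2,
     (1 - rho b11 b12 b21 b22 q.1 q.2) * (1 - q.2)) with hG
  have hρ : ContinuousOn (fun q : ℝ × ℝ => rho b11 b12 b21 b22 q.1 q.2) C :=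
    (rho_continuousOn b11 b12 b21 b22 hb).mono hCsub
  have hGcont : ContinuousOn G C := by
    apply ContinuousOn.prodMk (hρ.mul continuousOn_fst)
    apply ContinuousOn.prodMk (hρ.mul (continuousOn_const.sub continuousOn_fst))
    exact ContinuousOn.prodMk ((continuousOn_const.sub hρ).mul continuousOn_snd)
      ((continuousOn_const.sub hρ).mul (continuousOn_const.sub continuousOn_snd))
  have hset : depEquilibria a11 a12 a21 a22 b11 b12 b21 b22 = G '' C := by
    ext P
    simp only [depEquilibria, Set.mem_setOf_eq]
    constructor
    · rintro ⟨⟨h1, h2, h3, h4⟩, hsum, hf1, hf2⟩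
      have hr0 : 0 < P.1 + P.2.1 := by linarith
      have hr1 : P.1 + P.2.1 < 1 := by linarith
      have h1r : 0 < 1 - (P.1 + P.2.1) := by linarith
      set r := P.1 + P.2.1 with hrdef
      set x := P.1 / r with hxdef
      set y := P.2.2.1 / (1 - r) with hydef
      have hx0 : 0 < x := div_pos h1 hr0
      have hx1 : x < 1 := (div_lt_one hr0).mpr (by linarith)
      have hy0 : 0 < y := div_pos h3 h1r
      have hy1 : y < 1 := (div_lt_one h1r).mpr (by linarith)
      have e1 : P.1 = r * x := by rw [hxdef, mul_div_cancel₀ _ (ne_of_gt hr0)]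
      have e2 : P.2.1 = r * (1 - x) := by
        have : r * (1 - x) = r - r * x := by ring
        rw [this, ← e1]; simp only [hrdef]; ring
      have e3 : P.2.2.1 = (1 - r) * y := by rw [hydef, mul_div_cancel₀ _ (ne_of_gt h1r)]
      have e4 : P.2.2.2 = (1 - r) * (1 - y) := by
        have : (1 - r) * (1 - y) = (1 - r) - (1 - r) * y := by ring
        rw [this, ← e3]; simp only [hrdef]; linarith
      rw [e1, e2, e3, e4] at hf1 hf2
      have hEq : a11*x + a12*(1-x) = a21*y + a22*(1-y) := by
        have h5 : r*(1-r)*((a21*y + a22*(1-y)) - (a11*x + a12*(1-x))) = 0 := by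
          linear_combination hf1
        have h6 := mul_eq_zero.mp h5
        rcases h6 with h6 | h6
        · exact absurd h6 (by positivity)
        · linarith
      have hFq : Fq b11 b12 b21 b22 x y r = 0 := by
        simp only [Fq]; linear_combination hf2
      have hrho : r = rho b11 b12 b21 b22 x y :=
        rho_unique hb hx0 hx1 hy0 hy1 ⟨hr0, hr1⟩ hFq
      refine ⟨(x, y), ⟨⟨hx0, hx1⟩, ⟨hy0, hy1⟩, hEq⟩, ?_⟩
      have hGval : G (x, y) = (r * x, r * (1 - x), (1 - r) * y, (1 - r) * (1 - y)) := by
        simp only [hG, ← hrho]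
      rw [hGval, ← e1, ← e2, ← e3, ← e4]
    · rintro ⟨⟨x, y⟩, ⟨⟨hx0, hx1⟩, ⟨hy0, hy1⟩, hEq⟩, rfl⟩
      obtain ⟨⟨hr0, hr1⟩, hFr⟩ := rho_spec hb hx0 hx1 hy0 hy1
      set r := rho b11 b12 b21 b22 x y with hrdef
      simp only [hG]
      refine ⟨⟨?_, ?_, ?_, ?_⟩, ?_, ?_, ?_⟩
      · exact mul_pos hr0 hx0
      · exact mul_pos hr0 (by linarith)
      · exact mul_pos (by linarith) hy0
      · exact mul_pos (by linarith) (by linarith)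
      · ring
      · linear_combination (-(r*(1-r)))*hEq
      · simp only [Fq] at hFr; linear_combination hFr
  rw [hset]
  exact hCconn.image G hGcont
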